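/- Under the observer error dynamics ė_v = e_v × ω + e_γ − K e_v, ė_γ = e_γ × ω − L e_γ, ė_β = e_β × ω − M e_β with ω continuous and the symmetric parts of K, L, M positive definite, the equilibrium (0,0,0) is globally exponentially stable: there exist constants c, λ > 0 independent of ω such that |(e_v, e_γ, e_β)(t)| ≤ c e^{−λ(t−t₀)} |(e_v, e_γ, e_β)(t₀)|. -/

import Mathlib

open Matrix
open scoped Matrix

lemma dot_nonneg' (x : Fin 3 → ℝ) : 0 ≤ x ⬝ᵥ x :=
  Finset.sum_nonneg fun i _ => mul_self_nonneg _

lemma hasDerivAt_dot {u w : ℝ → Fin 3 → ℝ} {u' w' : Fin 3 → ℝ} {t : ℝ}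
    (hu : HasDerivAt u u' t) (hw : HasDerivAt w w' t) :
    HasDerivAt (fun s => u s ⬝ᵥ w s) (u' ⬝ᵥ w t + u t ⬝ᵥ w') t := by
  have h : ∀ i, HasDerivAt (fun s => u s i * w s i) (u' i * w t i + u t i * w' i) t :=
    fun i => (hasDerivAt_pi.mp hu i).mul (hasDerivAt_pi.mp hw i)
  simpa [dotProduct, Finset.sum_add_distrib] using HasDerivAt.fun_sum (fun i (_ : i ∈ Finset.univ) => h i)

lemma sym_dot (K : Matrix (Fin 3) (Fin 3) ℝ) (x : Fin 3 → ℝ) :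
    x ⬝ᵥ (((1/2:ℝ) • (K + Kᵀ)) *ᵥ x) = x ⬝ᵥ (K *ᵥ x) := by
  have h : x ⬝ᵥ (Kᵀ *ᵥ x) = x ⬝ᵥ (K *ᵥ x) := by
    rw [dotProduct_mulVec, vecMul_transpose, dotProduct_comm]
  rw [smul_mulVec, dotProduct_smul, add_mulVec, dotProduct_add, h]
  ring_nf

lemma posDef_lower (S : Matrix (Fin 3) (Fin 3) ℝ) (hS : S.PosDef) :
    ∃ α > 0, ∀ x : Fin 3 → ℝ, α * (x ⬝ᵥ x) ≤ x ⬝ᵥ (S *ᵥ x) := by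
  have hpos : ∀ x : Fin 3 → ℝ, x ≠ 0 → 0 < x ⬝ᵥ (S *ᵥ x) := by
    intro x hx
    have := hS.dotProduct_mulVec_pos hx
    simpa using this
  set f : (Fin 3 → ℝ) → ℝ := fun x => x ⬝ᵥ (S *ᵥ x) with hf
  have hcont : Continuous f := by
    simp only [hf, dotProduct, mulVec, dotProduct]
    exact continuous_finset_sum _ fun i _ =>
      (continuous_apply i).mul (continuous_finset_sum _ fun j _ =>
        continuous_const.mul (continuous_apply j))
  have hsne : (Metric.sphere (0 : Fin 3 → ℝ) 1).Nonempty := by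
    refine ⟨Pi.single 0 1, ?_⟩
    simp [mem_sphere_zero_iff_norm, Pi.norm_single]
  obtain ⟨u, hu, hmin⟩ := (isCompact_sphere (0 : Fin 3 → ℝ) 1).exists_isMinOn hsne
    hcont.continuousOn
  have hun : ‖u‖ = 1 := mem_sphere_zero_iff_norm.mp hu
  have hune : u ≠ 0 := by intro h; rw [h] at hun; simp at hun
  have hα0 : 0 < f u := hpos u hune
  refine ⟨f u / 3, by positivity, ?_⟩
  intro x
  rcases eq_or_ne x 0 with rfl | hx
  · simp [hf]
  · have hxn : 0 < ‖x‖ := norm_pos_iff.mpr hx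
    set v : Fin 3 → ℝ := ‖x‖⁻¹ • x with hv
    have hvn : v ∈ Metric.sphere (0 : Fin 3 → ℝ) 1 := by
      simp [hv, mem_sphere_zero_iff_norm, norm_smul, abs_of_pos (inv_pos.mpr hxn),
        inv_mul_cancel₀ hxn.ne']
    have hfv : f v = ‖x‖⁻¹ * (‖x‖⁻¹ * f x) := by
      simp [hf, hv, Matrix.mulVec_smul, smul_dotProduct, dotProduct_smul,
        smul_eq_mul]
    have h1 : f u ≤ f v := hmin hvn
    have h2 : f u * ‖x‖ ^ 2 ≤ f x := by
      rw [hfv] at h1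
      have := mul_le_mul_of_nonneg_right h1 (le_of_lt (by positivity : (0:ℝ) < ‖x‖ ^ 2))
      calc f u * ‖x‖ ^ 2 ≤ ‖x‖⁻¹ * (‖x‖⁻¹ * f x) * ‖x‖ ^ 2 := this
        _ = f x := by rw [sq]; field_simp
    have h3 : x ⬝ᵥ x ≤ 3 * ‖x‖ ^ 2 := by
      have hb : ∀ i : Fin 3, x i * x i ≤ ‖x‖ ^ 2 := by
        intro i
        have := norm_le_pi_norm x i
        have h0 : |x i| ≤ ‖x‖ := by simpa using this
        nlinarith [abs_nonneg (x i), norm_nonneg x, sq_abs (x i)]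
      calc x ⬝ᵥ x = ∑ i, x i * x i := rfl
        _ ≤ ∑ _i : Fin 3, ‖x‖ ^ 2 := Finset.sum_le_sum fun i _ => hb i
        _ = 3 * ‖x‖ ^ 2 := by simp [Fin.sum_univ_three]
    nlinarith [hα0]

set_option maxHeartbeats 1000000 in
theorem observer_error_GES (K L M : Matrix (Fin 3) (Fin 3) ℝ)
    (hK : ((1 / 2 : ℝ) • (K + Kᵀ)).PosDef)
    (hL : ((1 / 2 : ℝ) • (L + Lᵀ)).PosDef)
    (hM : ((1 / 2 : ℝ) • (M + Mᵀ)).PosDef) :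
    ∃ c > 0, ∃ lam > 0, ∀ ω : ℝ → Fin 3 → ℝ, Continuous ω →
      ∀ ev eγ eβ : ℝ → Fin 3 → ℝ,
        (∀ t, HasDerivAt ev (ev t ⨯₃ ω t + eγ t - K *ᵥ ev t) t) →
        (∀ t, HasDerivAt eγ (eγ t ⨯₃ ω t - L *ᵥ eγ t) t) →
        (∀ t, HasDerivAt eβ (eβ t ⨯₃ ω t - M *ᵥ eβ t) t) →
        ∀ t₀ t, t₀ ≤ t →
          Real.sqrt (ev t ⬝ᵥ ev t + eγ t ⬝ᵥ eγ t + eβ t ⬝ᵥ eβ t) ≤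
            c * Real.exp (-lam * (t - t₀)) *
              Real.sqrt (ev t₀ ⬝ᵥ ev t₀ + eγ t₀ ⬝ᵥ eγ t₀ + eβ t₀ ⬝ᵥ eβ t₀) := by
  obtain ⟨αK, hαK, hKb⟩ := posDef_lower _ hK
  obtain ⟨αL, hαL, hLb⟩ := posDef_lower _ hL
  obtain ⟨αM, hαM, hMb⟩ := posDef_lower _ hM
  have hKb' : ∀ x : Fin 3 → ℝ, αK * (x ⬝ᵥ x) ≤ x ⬝ᵥ (K *ᵥ x) := fun x => (sym_dot K x) ▸ hKb x
  have hLb' : ∀ x : Fin 3 → ℝ, αL * (x ⬝ᵥ x) ≤ x ⬝ᵥ (L *ᵥ x) := fun x => (sym_dot L x) ▸ hLb x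
  have hMb' : ∀ x : Fin 3 → ℝ, αM * (x ⬝ᵥ x) ≤ x ⬝ᵥ (M *ᵥ x) := fun x => (sym_dot M x) ▸ hMb x
  set μ : ℝ := max 1 ((1 + αK)/(αK * αL)) with hμ
  have hμ1 : (1:ℝ) ≤ μ := le_max_left _ _
  have hμ0 : (0:ℝ) < μ := lt_of_lt_of_le one_pos hμ1
  have hμL : 1 + αK ≤ μ * (αK * αL) := by
    have h := le_max_right 1 ((1 + αK)/(αK * αL))
    rw [div_le_iff₀ (by positivity)] at h
    exact h
  set lam2 : ℝ := min αK (min (2/μ) (2*αM)) with hlam2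
  have hlam2pos : 0 < lam2 := lt_min hαK (lt_min (by positivity) (by positivity))
  refine ⟨Real.sqrt μ, Real.sqrt_pos.mpr hμ0, lam2/2, by positivity, ?_⟩
  intro ω hω ev eγ eβ hev heγ heβ t₀ t ht
  set V : ℝ → ℝ := fun s => ev s ⬝ᵥ ev s + μ * (eγ s ⬝ᵥ eγ s) + eβ s ⬝ᵥ eβ s with hV
  set g : ℝ → ℝ := fun s => V s * Real.exp (lam2 * s) with hg
  -- derivative of g at each point
  have hVd : ∀ s, HasDerivAt V
      (((ev s ⨯₃ ω s + eγ s - K *ᵥ ev s) ⬝ᵥ ev s + ev s ⬝ᵥ (ev s ⨯₃ ω s + eγ s - K *ᵥ ev s))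
        + μ * ((eγ s ⨯₃ ω s - L *ᵥ eγ s) ⬝ᵥ eγ s + eγ s ⬝ᵥ (eγ s ⨯₃ ω s - L *ᵥ eγ s))
        + ((eβ s ⨯₃ ω s - M *ᵥ eβ s) ⬝ᵥ eβ s + eβ s ⬝ᵥ (eβ s ⨯₃ ω s - M *ᵥ eβ s))) s := by
    intro s
    exact ((hasDerivAt_dot (hev s) (hev s)).add
      ((hasDerivAt_dot (heγ s) (heγ s)).const_mul μ)).add (hasDerivAt_dot (heβ s) (heβ s))
  have hgd : ∀ s, HasDerivAt g
      ((((ev s ⨯₃ ω s + eγ s - K *ᵥ ev s) ⬝ᵥ ev s + ev s ⬝ᵥ (ev s ⨯₃ ω s + eγ s - K *ᵥ ev s))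
        + μ * ((eγ s ⨯₃ ω s - L *ᵥ eγ s) ⬝ᵥ eγ s + eγ s ⬝ᵥ (eγ s ⨯₃ ω s - L *ᵥ eγ s))
        + ((eβ s ⨯₃ ω s - M *ᵥ eβ s) ⬝ᵥ eβ s + eβ s ⬝ᵥ (eβ s ⨯₃ ω s - M *ᵥ eβ s)))
          * Real.exp (lam2 * s)
        + V s * (Real.exp (lam2 * s) * lam2)) s := by
    intro s
    have hexp : HasDerivAt (fun s => Real.exp (lam2 * s)) (Real.exp (lam2 * s) * lam2) s := by
      simpa using (((hasDerivAt_id s).const_mul lam2).exp)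
    exact (hVd s).mul hexp
  -- the derivative is nonpositive
  have hkey : ∀ s, deriv g s ≤ 0 := by
    intro s
    rw [(hgd s).deriv]
    set a := ev s; set b := eγ s; set c := eβ s
    have hA : 0 ≤ a ⬝ᵥ a := dot_nonneg' a
    have hB : 0 ≤ b ⬝ᵥ b := dot_nonneg' b
    have hC : 0 ≤ c ⬝ᵥ c := dot_nonneg' c
    -- simplify the dot products
    have e1 : (a ⨯₃ ω s + b - K *ᵥ a) ⬝ᵥ a = a ⬝ᵥ b - a ⬝ᵥ (K *ᵥ a) := by
      rw [sub_dotProduct, add_dotProduct, dotProduct_comm _ a, dot_self_cross,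
        dotProduct_comm b a, dotProduct_comm _ a]
      ring
    have e2 : a ⬝ᵥ (a ⨯₃ ω s + b - K *ᵥ a) = a ⬝ᵥ b - a ⬝ᵥ (K *ᵥ a) := by
      rw [dotProduct_sub, dotProduct_add, dot_self_cross]
      ring
    have e3 : (b ⨯₃ ω s - L *ᵥ b) ⬝ᵥ b = -(b ⬝ᵥ (L *ᵥ b)) := by
      rw [sub_dotProduct, dotProduct_comm _ b, dot_self_cross, dotProduct_comm _ b]
      ring
    have e4 : b ⬝ᵥ (b ⨯₃ ω s - L *ᵥ b) = -(b ⬝ᵥ (L *ᵥ b)) := by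
      rw [dotProduct_sub, dot_self_cross]; ring
    have e5 : (c ⨯₃ ω s - M *ᵥ c) ⬝ᵥ c = -(c ⬝ᵥ (M *ᵥ c)) := by
      rw [sub_dotProduct, dotProduct_comm _ c, dot_self_cross, dotProduct_comm _ c]
      ring
    have e6 : c ⬝ᵥ (c ⨯₃ ω s - M *ᵥ c) = -(c ⬝ᵥ (M *ᵥ c)) := by
      rw [dotProduct_sub, dot_self_cross]; ring
    rw [e1, e2, e3, e4, e5, e6]
    -- Young's inequality for the cross term (multiplied through by αK)
    have hab : 2 * (αK * (a ⬝ᵥ b)) ≤ αK * (αK * (a ⬝ᵥ a)) + b ⬝ᵥ b := by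
      have hy := dot_nonneg' (αK • a - b)
      simp only [sub_dotProduct, dotProduct_sub, smul_dotProduct, dotProduct_smul,
        smul_eq_mul] at hy
      have hba : b ⬝ᵥ a = a ⬝ᵥ b := dotProduct_comm b a
      rw [hba] at hy
      linarith
    have h2 : αK * (a ⬝ᵥ a) ≤ a ⬝ᵥ (K *ᵥ a) := hKb' a
    have h3 : (1 + αK) * (b ⬝ᵥ b) ≤ αK * (μ * (b ⬝ᵥ (L *ᵥ b))) := by
      have h31 : (αK * μ) * (αL * (b ⬝ᵥ b)) ≤ (αK * μ) * (b ⬝ᵥ (L *ᵥ b)) :=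
        mul_le_mul_of_nonneg_left (hLb' b) (by positivity)
      have h32 : (1 + αK) * (b ⬝ᵥ b) ≤ (μ * (αK * αL)) * (b ⬝ᵥ b) :=
        mul_le_mul_of_nonneg_right hμL hB
      nlinarith
    have h4 : αM * (c ⬝ᵥ c) ≤ c ⬝ᵥ (M *ᵥ c) := hMb' c
    have h5 : lam2 ≤ αK := min_le_left _ _
    have h6 : lam2 * μ ≤ 2 := by
      have := (min_le_right αK _).trans (min_le_left (2/μ) (2*αM))
      have h := le_trans (min_le_right αK (min (2/μ) (2*αM))) (min_le_left (2/μ) (2*αM))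
      rw [le_div_iff₀ hμ0] at h
      exact h
    have h7 : lam2 ≤ 2*αM := le_trans (min_le_right αK _) (min_le_right _ _)
    have hE : 0 < Real.exp (lam2 * s) := Real.exp_pos _
    have hVs : V s = a ⬝ᵥ a + μ * (b ⬝ᵥ b) + c ⬝ᵥ c := rfl
    rw [hVs]
    have hlin : ((a ⬝ᵥ b - a ⬝ᵥ (K *ᵥ a)) + (a ⬝ᵥ b - a ⬝ᵥ (K *ᵥ a))
        + μ * (-(b ⬝ᵥ (L *ᵥ b)) + -(b ⬝ᵥ (L *ᵥ b)))
        + (-(c ⬝ᵥ (M *ᵥ c)) + -(c ⬝ᵥ (M *ᵥ c))))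
        + (a ⬝ᵥ a + μ * (b ⬝ᵥ b) + c ⬝ᵥ c) * lam2 ≤ 0 := by
      have p1 : lam2 * (a ⬝ᵥ a) ≤ αK * (a ⬝ᵥ a) := mul_le_mul_of_nonneg_right h5 hA
      have p2 : lam2 * μ * (b ⬝ᵥ b) ≤ 2 * (b ⬝ᵥ b) := mul_le_mul_of_nonneg_right h6 hB
      have p3 : lam2 * (c ⬝ᵥ c) ≤ 2*αM * (c ⬝ᵥ c) := mul_le_mul_of_nonneg_right h7 hC
      have q2 := mul_le_mul_of_nonneg_left h2 hαK.le
      have q4 := mul_le_mul_of_nonneg_left h4 hαK.le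
      have q5 := mul_le_mul_of_nonneg_left p1 hαK.le
      have q6 := mul_le_mul_of_nonneg_left p2 hαK.le
      have q7 := mul_le_mul_of_nonneg_left p3 hαK.le
      by_contra hcon
      push_neg at hcon
      have hpos := mul_pos hαK hcon
      nlinarith [hab, q2, h3, q4, q5, q6, q7, hB, hpos]
    have hfin := mul_le_mul_of_nonneg_right hlin hE.le
    rw [zero_mul] at hfin
    nlinarith [hfin]
  -- g is antitone
  have hanti : Antitone g :=
    antitone_of_deriv_nonpos (fun s => (hgd s).differentiableAt) hkey
  have hgt : g t ≤ g t₀ := hanti ht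
  -- unpack
  have hVN : V t * Real.exp (lam2 * t) ≤ V t₀ * Real.exp (lam2 * t₀) := hgt
  have hVt : V t ≤ Real.exp (-lam2 * (t - t₀)) * V t₀ := by
    have hE : 0 < Real.exp (lam2 * t) := Real.exp_pos _
    calc V t ≤ V t₀ * Real.exp (lam2 * t₀) / Real.exp (lam2 * t) :=
        (le_div_iff₀ hE).mpr hVN
      _ = Real.exp (-lam2 * (t - t₀)) * V t₀ := by
        rw [div_eq_mul_inv, ← Real.exp_neg, mul_assoc, ← Real.exp_add]
        ring_nf
  set N : ℝ → ℝ := fun s => ev s ⬝ᵥ ev s + eγ s ⬝ᵥ eγ s + eβ s ⬝ᵥ eβ s with hN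
  have hN0 : ∀ s, 0 ≤ N s := fun s => by
    have := dot_nonneg' (ev s); have := dot_nonneg' (eγ s); have := dot_nonneg' (eβ s)
    simp only [hN]; linarith
  have hNV : N t ≤ V t := by
    have hB := dot_nonneg' (eγ t)
    simp only [hN, hV]
    nlinarith
  have hVμN : V t₀ ≤ μ * N t₀ := by
    have hA := dot_nonneg' (ev t₀); have hB := dot_nonneg' (eγ t₀)
    have hC := dot_nonneg' (eβ t₀)
    simp only [hN, hV]
    nlinarith
  have hfinal : N t ≤ μ * Real.exp (-lam2 * (t - t₀)) * N t₀ := by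
    have hE : 0 ≤ Real.exp (-lam2 * (t - t₀)) := (Real.exp_pos _).le
    calc N t ≤ V t := hNV
      _ ≤ Real.exp (-lam2 * (t - t₀)) * V t₀ := hVt
      _ ≤ Real.exp (-lam2 * (t - t₀)) * (μ * N t₀) := mul_le_mul_of_nonneg_left hVμN hE
      _ = μ * Real.exp (-lam2 * (t - t₀)) * N t₀ := by ring
  -- take square roots
  have hR : (Real.sqrt μ * Real.exp (-(lam2/2) * (t - t₀)) * Real.sqrt (N t₀)) ^ 2
      = μ * Real.exp (-lam2 * (t - t₀)) * N t₀ := by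
    rw [mul_pow, mul_pow, Real.sq_sqrt hμ0.le, Real.sq_sqrt (hN0 t₀), ← Real.exp_nat_mul]
    ring_nf
  calc Real.sqrt (N t) ≤ Real.sqrt ((Real.sqrt μ * Real.exp (-(lam2/2) * (t - t₀)) *
        Real.sqrt (N t₀)) ^ 2) := Real.sqrt_le_sqrt (by rw [hR]; exact hfinal)
    _ = Real.sqrt μ * Real.exp (-(lam2/2) * (t - t₀)) * Real.sqrt (N t₀) :=
        Real.sqrt_sq (by positivity)
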